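/- arXiv:1807.11523 — 2 statements merged into one kernel-verified Lean document; each statement's English description precedes it below -/
import Mathlib

section
/- Let H be a monoid such that the reduced quotient H_red = H/H^× is finitely generated, let a, b ∈ H be nonunits, and let x ∈ ℚ with x ≥ 0. Then there exists a nice pair (k', ℓ') with respect to (a, b), with k' ∈ ℕ and ℓ' ∈ ℕ₀, such that ℓ'/k' = x. -/
open Filter Topology

/-- The set of factorization lengths of `a`: the set of all `k` such that `a` is a
product of `k` atoms (irreducibles); by convention it is `{0}` for units. -/
noncomputable def lengthSet (H : Type*) [CommMonoid H] (a : H) : Set ℕ :=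
  open Classical in
  if IsUnit a then {0}
  else {k | ∃ f : Fin k → H, (∀ i, Irreducible (f i)) ∧ a = ∏ i, f i}

/-- The elasticity `ρ(a) = max L(a) / min L(a)` of an element of a BF-monoid,
with `ρ(a) = 1` for units. -/
noncomputable def elasticity (H : Type*) [CommMonoid H] (a : H) : ℝ :=
  open Classical in
  if IsUnit a then 1
  else ((sSup (lengthSet H a) : ℕ) : ℝ) / ((sInf (lengthSet H a) : ℕ) : ℝ)

/-- The elasticity `ρ(H) = sup {ρ(a) : a ∈ H} ∈ ℝ≥1 ∪ {∞}` of the monoid `H`. -/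
noncomputable def monoidElasticity (H : Type*) [CommMonoid H] : EReal :=
  ⨆ a : H, ((elasticity H a : ℝ) : EReal)

/-- The set `R̄(H)` of asymptotic elasticities `ρ̄(a) = lim_{n → ∞} ρ(aⁿ)`
of nonunits `a ∈ H` (membership requires the limit to exist). -/
def asympSet (H : Type*) [CommMonoid H] : Set EReal :=
  {r | ∃ a : H, ¬ IsUnit a ∧
    Tendsto (fun n : ℕ => ((elasticity H (a ^ n) : ℝ) : EReal)) atTop (nhds r)}

/-- `H` is locally finitely generated: for every `a ∈ H` there are only finitely many
atoms, up to associates, dividing some power of `a`. -/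
def LocallyFinitelyGenerated (H : Type*) [CommMonoid H] : Prop :=
  ∀ a : H, {u : Associates H | Irreducible u ∧ ∃ n : ℕ, u ∣ Associates.mk (a ^ n)}.Finite

/-- `H` is a BF-monoid: atomic (every nonunit has a factorization into atoms) and
all sets of lengths are finite. -/
def IsBFMonoid (H : Type*) [CommMonoid H] : Prop :=
  (∀ a : H, ¬ IsUnit a → (lengthSet H a).Nonempty) ∧ ∀ a : H, (lengthSet H a).Finite

/-- `(k, ℓ) ≠ (0,0)` is a nice pair with respect to `(a, b)` if
`max L((aᵏbˡ)ᵗ) = t · max L(aᵏbˡ)` and `min L((aᵏbˡ)ᵗ) = t · min L(aᵏbˡ)` for all `t ∈ ℕ`. -/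
def IsNicePair (H : Type*) [CommMonoid H] (a b : H) (k ℓ : ℕ) : Prop :=
  ¬ (k = 0 ∧ ℓ = 0) ∧ ∀ t : ℕ, 0 < t →
    sSup (lengthSet H ((a ^ k * b ^ ℓ) ^ t)) = t * sSup (lengthSet H (a ^ k * b ^ ℓ)) ∧
    sInf (lengthSet H ((a ^ k * b ^ ℓ) ^ t)) = t * sInf (lengthSet H (a ^ k * b ^ ℓ))

/-- `H` is strongly primary: `H ≠ H^×` and for every nonunit `a` there is `n ∈ ℕ`
such that every product of `n` nonunits of `H` is divisible by `a`. -/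
def StronglyPrimary (H : Type*) [CommMonoid H] : Prop :=
  (∃ a : H, ¬ IsUnit a) ∧ ∀ a : H, ¬ IsUnit a → ∃ n : ℕ, 0 < n ∧
    ∀ f : Fin n → H, (∀ i, ¬ IsUnit (f i)) → a ∣ ∏ i, f i

/-- `H` is half-factorial: atomic and `|L(a)| = 1` for every `a ∈ H`. -/
def IsHalfFactorial (H : Type*) [CommMonoid H] : Prop :=
  ∀ a : H, ∃ k : ℕ, lengthSet H a = {k}


section Helpers

variable {M : Type*} [CommMonoid M]

private lemma multiset_to_expvec (s : Finset M) (m : Multiset M) (h : ∀ x ∈ m, x ∈ s) :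
    ∃ e : {x // x ∈ s} → ℕ, (∏ x : {x // x ∈ s}, (x : M) ^ e x) = m.prod ∧
      (∑ x : {x // x ∈ s}, e x) = Multiset.card m := by
  classical
  refine ⟨fun x => m.count ↑x, ?_, ?_⟩
  · rw [Finset.prod_coe_sort s (fun x => x ^ m.count x)]
    rw [Finset.prod_multiset_count m]
    refine (Finset.prod_subset (fun x hx => h x (Multiset.mem_toFinset.mp hx))
      (fun x _ hx => ?_)).symm
    rw [Multiset.count_eq_zero_of_notMem (fun hc => hx (Multiset.mem_toFinset.mpr hc)), pow_zero]
  · rw [Finset.sum_coe_sort s (fun x => m.count x)]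
    rw [← Multiset.toFinset_sum_count_eq m]
    refine (Finset.sum_subset (fun x hx => h x (Multiset.mem_toFinset.mp hx))
      (fun x _ hx => ?_)).symm
    exact Multiset.count_eq_zero_of_notMem (fun hc => hx (Multiset.mem_toFinset.mpr hc))

private lemma expvec_to_multiset (s : Finset M) (e : {x // x ∈ s} → ℕ) :
    ∃ m : Multiset M, (∀ x ∈ m, x ∈ s) ∧ m.prod = (∏ x : {x // x ∈ s}, (x : M) ^ e x) ∧
      Multiset.card m = ∑ x : {x // x ∈ s}, e x := by
  refine ⟨∑ x : {x // x ∈ s}, Multiset.replicate (e x) (↑x : M), ?_, ?_, ?_⟩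
  · intro x hx
    rw [Multiset.mem_sum] at hx
    obtain ⟨i, _, hi⟩ := hx
    rw [Multiset.eq_of_mem_replicate hi]; exact i.2
  · classical
    induction (Finset.univ : Finset {x // x ∈ s}) using Finset.induction_on with
    | empty => simp
    | insert _ _ hx ih => simp [Finset.sum_insert hx, Finset.prod_insert hx, Multiset.prod_add, ih]
  · classical
    induction (Finset.univ : Finset {x // x ∈ s}) using Finset.induction_on with
    | empty => simp
    | insert _ _ hx ih => simp [Finset.sum_insert hx, Multiset.card_add, ih]

private lemma prod_get_eq (l : List M) {n : ℕ} (h : l.length = n) :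
    (∏ i : Fin n, l.get (Fin.cast h.symm i)) = l.prod := by
  subst h
  rw [← List.prod_ofFn]
  simp [List.ofFn_get]

private lemma lengthSet_iff_multiset {y : M} (hy : ¬ IsUnit y) {k : ℕ} :
    k ∈ lengthSet M y ↔
      ∃ m : Multiset M, (∀ x ∈ m, Irreducible x) ∧ m.prod = y ∧ Multiset.card m = k := by
  rw [lengthSet, if_neg hy]
  constructor
  · rintro ⟨f, hf, rfl⟩
    refine ⟨Multiset.ofList (List.ofFn f), ?_, ?_, by simp⟩
    · intro x hx
      rw [Multiset.coe_eq_coe.mpr (List.Perm.refl _)] at hx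
      obtain ⟨i, rfl⟩ := (List.mem_ofFn (f := f) (a := x)).mp hx
      exact hf i
    · simpa using List.prod_ofFn (f := f)
  · rintro ⟨m, hm, hprod, rfl⟩
    refine ⟨fun i => m.toList.get (Fin.cast m.length_toList.symm i), fun i => ?_, ?_⟩
    · exact hm _ (by rw [← Multiset.mem_toList]; exact m.toList.get_mem _)
    · rw [prod_get_eq m.toList m.length_toList, Multiset.prod_toList, hprod]

private lemma lengthSet_iff_expvec {Φ : Finset M} (hΦ : ∀ x : M, Irreducible x ↔ x ∈ Φ)
    {y : M} (hy : ¬ IsUnit y) {k : ℕ} :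
    k ∈ lengthSet M y ↔
      ∃ e : {x // x ∈ Φ} → ℕ, (∏ x : {x // x ∈ Φ}, (x : M) ^ e x) = y ∧
        (∑ x : {x // x ∈ Φ}, e x) = k := by
  rw [lengthSet_iff_multiset hy]
  constructor
  · rintro ⟨m, hm, hprod, rfl⟩
    obtain ⟨e, he1, he2⟩ := multiset_to_expvec Φ m (fun x hx => (hΦ x).mp (hm x hx))
    exact ⟨e, by rw [he1, hprod], he2⟩
  · rintro ⟨e, he1, he2⟩
    obtain ⟨m, hm1, hm2, hm3⟩ := expvec_to_multiset Φ e
    exact ⟨m, fun x hx => (hΦ x).mpr (hm1 x hx), by rw [hm2, he1], by rw [hm3, he2]⟩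

end Helpers

section AssocAux

variable {H : Type*} [CancelCommMonoid H]

private lemma assoc_cancel {x y z : Associates H} (h : x * y = x * z) : y = z := by
  obtain ⟨a, rfl⟩ := Associates.mk_surjective x
  obtain ⟨b, rfl⟩ := Associates.mk_surjective y
  obtain ⟨c, rfl⟩ := Associates.mk_surjective z
  rw [Associates.mk_mul_mk, Associates.mk_mul_mk, Associates.mk_eq_mk_iff_associated] at h
  obtain ⟨u, hu⟩ := h
  rw [Associates.mk_eq_mk_iff_associated]
  exact ⟨u, mul_left_cancel (a := a) (by rw [← mul_assoc]; exact hu)⟩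

/-- The product-splitting helper: if `g ≤ h` pointwise then
`∏ x ^ h x = (∏ x ^ g x) * ∏ x ^ (h x - g x)`. -/
private lemma prod_pow_sub {ι : Type*} [Fintype ι] {M : Type*} [CommMonoid M]
    (u : ι → M) {g h2 : ι → ℕ} (hle : g ≤ h2) :
    (∏ x, u x ^ h2 x) = (∏ x, u x ^ g x) * ∏ x, u x ^ (h2 x - g x) := by
  rw [← Finset.prod_mul_distrib]
  refine Finset.prod_congr rfl fun x _ => ?_
  rw [← pow_add, Nat.add_sub_cancel' (hle x)]

end AssocAux

section Atomic

variable {H : Type*} [CancelCommMonoid H]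

private lemma exists_expvec (S : Finset (Associates H))
    (hS : Submonoid.closure (S : Set (Associates H)) = ⊤) (x : Associates H) :
    ∃ e : {y // y ∈ S} → ℕ, (∏ y : {y // y ∈ S}, (y : Associates H) ^ e y) = x := by
  obtain ⟨l, hl, hprod⟩ := Submonoid.exists_list_of_mem_closure
    (s := (S : Set (Associates H))) (by rw [hS]; exact Submonoid.mem_top x)
  obtain ⟨e, he1, _⟩ := multiset_to_expvec S (l : Multiset (Associates H))
    (fun y hy => hl y (by simpa using hy))
  exact ⟨e, by rw [he1]; simpa using hprod⟩

private lemma properDvd_wf (S : Finset (Associates H))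
    (hS : Submonoid.closure (S : Set (Associates H)) = ⊤) :
    WellFounded (fun b a : Associates H => b ∣ a ∧ b ≠ a) := by
  have hanti : ∀ {x y : Associates H}, x ∣ y → y ∣ x → x = y := by
    intro x y ⟨u, hu⟩ ⟨v, hv⟩
    have h1 : x * 1 = x * (u * v) := by rw [mul_one, ← mul_assoc, ← hu, ← hv]
    have huv := (assoc_cancel h1).symm
    have : IsUnit u := IsUnit.of_mul_eq_one v huv
    rw [Associates.isUnit_iff_eq_one] at this
    rw [hu, this, mul_one]
  letI : IsIrrefl (Associates H) (fun b a => b ∣ a ∧ b ≠ a) := ⟨fun _ h => h.2 rfl⟩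
  letI : IsTrans (Associates H) (fun b a => b ∣ a ∧ b ≠ a) :=
    ⟨fun a b c hab hbc => ⟨hab.1.trans hbc.1, fun h => hbc.2 (hanti hbc.1 (h ▸ hab.1))⟩⟩
  letI : IsStrictOrder (Associates H) (fun b a => b ∣ a ∧ b ≠ a) := ⟨⟩
  rw [RelEmbedding.wellFounded_iff_isEmpty]
  by_contra hcon
  rw [not_isEmpty_iff] at hcon
  obtain ⟨f⟩ := hcon
  choose e he using fun n => exists_expvec S hS (f n)
  haveI : IsWellOrder ℕ (· < ·) := isWellOrder_lt
  have hpwo : (Set.univ : Set ({y // y ∈ S} → ℕ)).IsPWO := Set.isPWO_univ_iff.mpr inferInstance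
  obtain ⟨i, j, hij, hle⟩ := hpwo.exists_lt (f := e) (fun n => Set.mem_univ _)
  have hdvd : f i ∣ f j := by
    refine ⟨∏ y : {y // y ∈ S}, (y : Associates H) ^ (e j y - e i y), ?_⟩
    rw [← he i, ← he j]
    exact prod_pow_sub _ hle
  have hr : f j ∣ f i ∧ f j ≠ f i := f.map_rel_iff.mpr hij
  obtain ⟨u, hu⟩ := hdvd
  obtain ⟨v, hv⟩ := hr.1
  have h1 : f i * 1 = f i * (u * v) := by
    rw [mul_one, ← mul_assoc, ← hu, ← hv]
  have huv : (1 : Associates H) = u * v := assoc_cancel h1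
  have hvunit : IsUnit v := IsUnit.of_mul_eq_one u (by rw [mul_comm, ← huv])
  rw [Associates.isUnit_iff_eq_one] at hvunit
  exact hr.2 (by rw [hv, hvunit, mul_one])

private lemma assoc_atomic (S : Finset (Associates H))
    (hS : Submonoid.closure (S : Set (Associates H)) = ⊤) (x : Associates H) :
    ¬ IsUnit x → ∃ m : Multiset (Associates H), (∀ y ∈ m, Irreducible y) ∧ m.prod = x := by
  induction x using (properDvd_wf S hS).induction with
  | _ x ih =>
    intro hx
    by_cases hi : Irreducible x
    · exact ⟨{x}, by simpa using hi, by simp⟩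
    · rw [irreducible_iff] at hi
      push_neg at hi
      obtain ⟨u, v, huv, hu, hv⟩ := hi hx
      have hru : u ∣ x ∧ u ≠ x := by
        refine ⟨⟨v, huv⟩, fun h => hv ?_⟩
        subst h
        have : u * 1 = u * v := by rw [mul_one, ← huv]
        rw [← assoc_cancel this]
        exact isUnit_one
      have hrv : v ∣ x ∧ v ≠ x := by
        refine ⟨⟨u, by rw [huv, mul_comm]⟩, fun h => hu ?_⟩
        subst h
        have : v * 1 = v * u := by rw [mul_one, mul_comm, ← huv]
        rw [← assoc_cancel this]
        exact isUnit_one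
      obtain ⟨m1, hm1, hp1⟩ := ih u hru hu
      obtain ⟨m2, hm2, hp2⟩ := ih v hrv hv
      refine ⟨m1 + m2, ?_, by rw [Multiset.prod_add, hp1, hp2, huv]⟩
      intro y hy
      rcases Multiset.mem_add.mp hy with h | h
      · exact hm1 y h
      · exact hm2 y h

private lemma irreducible_mem_gen (S : Finset (Associates H))
    (hS : Submonoid.closure (S : Set (Associates H)) = ⊤) {x : Associates H}
    (hx : Irreducible x) : x ∈ S := by
  obtain ⟨l, hl, hprod⟩ := Submonoid.exists_list_of_mem_closure
    (s := (S : Set (Associates H))) (by rw [hS]; exact Submonoid.mem_top x)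
  subst hprod
  induction l with
  | nil => exact absurd hx (by simpa using not_irreducible_one)
  | cons a l ihl =>
    rw [List.prod_cons] at hx ⊢
    rcases hx.isUnit_or_isUnit rfl with h | h
    · rw [Associates.isUnit_iff_eq_one] at h
      rw [h, one_mul] at hx ⊢
      exact ihl (fun y hy => hl y (List.mem_cons_of_mem a hy)) hx
    · rw [Associates.isUnit_iff_eq_one] at h
      rw [h, mul_one]
      exact hl a (List.mem_cons_self)

end Atomic

section Core

variable {H : Type*} [CancelCommMonoid H]

private def EP (Φ : Finset (Associates H)) (e : {x // x ∈ Φ} → ℕ) : Associates H :=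
  ∏ x : {x // x ∈ Φ}, (x : Associates H) ^ e x

private def TS (c : Associates H) (Φ : Finset (Associates H)) :
    Set (ℕ × ({x // x ∈ Φ} → ℕ)) :=
  {v | 1 ≤ v.1 ∧ EP Φ v.2 = c ^ v.1}

private def SZ (Φ : Finset (Associates H)) (e : {x // x ∈ Φ} → ℕ) : ℕ := ∑ x, e x

private lemma TS_sub {c : Associates H} {Φ : Finset (Associates H)}
    (hΦ : ∀ x : Associates H, Irreducible x ↔ x ∈ Φ)
    {v w : ℕ × ({x // x ∈ Φ} → ℕ)} (hv : v ∈ TS c Φ) (hw : w ∈ TS c Φ)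
    (hle : w ≤ v) (hne : w ≠ v) : v - w ∈ TS c Φ := by
  obtain ⟨hw1, hw2⟩ := hw
  obtain ⟨hv1, hv2⟩ := hv
  have hle1 : w.1 ≤ v.1 := hle.1
  have hle2 : w.2 ≤ v.2 := hle.2
  -- split the product
  have hsplit : EP Φ v.2 = EP Φ w.2 * EP Φ (v.2 - w.2) := by
    have := prod_pow_sub (fun x : {x // x ∈ Φ} => (x : Associates H)) hle2
    simpa [EP] using this
  have hP : EP Φ (v.2 - w.2) = c ^ (v.1 - w.1) := by
    apply assoc_cancel (x := EP Φ w.2)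
    rw [← hsplit, hv2, hw2, ← pow_add, Nat.add_sub_cancel' hle1]
  -- show the first coordinates differ
  have h1ne : w.1 ≠ v.1 := by
    intro h1
    have hP1 : EP Φ (v.2 - w.2) = 1 := by rw [hP, h1, Nat.sub_self, pow_zero]
    have h2eq : v.2 = w.2 := by
      funext x
      by_contra hx
      have hlex : w.2 x ≤ v.2 x := hle2 x
      have hxlt : 1 ≤ v.2 x - w.2 x := by omega
      have hdvd : (x : Associates H) ∣ 1 := by
        rw [← hP1]
        exact dvd_trans (dvd_pow_self _ (by omega : v.2 x - w.2 x ≠ 0))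
          (Finset.dvd_prod_of_mem _ (Finset.mem_univ x))
      exact ((hΦ x).mpr x.2).not_isUnit (isUnit_of_dvd_one hdvd)
    exact hne (Prod.ext h1 h2eq.symm)
  have hfst : (v - w).1 = v.1 - w.1 := rfl
  have hsnd : (v - w).2 = v.2 - w.2 := rfl
  refine ⟨by rw [hfst]; omega, ?_⟩
  rw [hfst, hsnd, hP]

private lemma TS_smul {c : Associates H} {Φ : Finset (Associates H)}
    {w : ℕ × ({x // x ∈ Φ} → ℕ)} (hw : w ∈ TS c Φ) (n : ℕ) (hn : 1 ≤ n) :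
    ((n * w.1, fun x => n * w.2 x) : ℕ × ({x // x ∈ Φ} → ℕ)) ∈ TS c Φ := by
  obtain ⟨hw1, hw2⟩ := hw
  refine ⟨Nat.mul_pos hn hw1, ?_⟩
  show EP Φ (fun x => n * w.2 x) = c ^ (n * w.1)
  rw [mul_comm n w.1, pow_mul, ← hw2, EP, EP, ← Finset.prod_pow]
  exact Finset.prod_congr rfl fun x _ => by rw [← pow_mul, mul_comm]

private lemma sum_le_sum_of_le {Φ : Finset (Associates H)} {g h : {x // x ∈ Φ} → ℕ}
    (hle : g ≤ h) : SZ Φ g ≤ SZ Φ h :=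
  Finset.sum_le_sum fun x _ => hle x

private lemma measure_lt {Φ : Finset (Associates H)} {v w : ℕ × ({x // x ∈ Φ} → ℕ)}
    (hle : w ≤ v) (hne : w ≠ v) : w.1 + SZ Φ w.2 < v.1 + SZ Φ v.2 := by
  have h1 : w.1 ≤ v.1 := hle.1
  have h2 : SZ Φ w.2 ≤ SZ Φ v.2 := sum_le_sum_of_le hle.2
  rcases lt_or_eq_of_le h1 with h | h
  · omega
  rcases lt_or_eq_of_le h2 with h' | h'
  · omega
  exfalso
  apply hne
  refine Prod.ext h ?_
  have := (Finset.sum_eq_sum_iff_of_le (fun x _ => hle.2 x)).mp h'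
  funext x
  exact this x (Finset.mem_univ x)

private lemma sz_split {Φ : Finset (Associates H)} {v w : ℕ × ({x // x ∈ Φ} → ℕ)}
    (hle : w ≤ v) : SZ Φ v.2 = SZ Φ w.2 + SZ Φ (v.2 - w.2) := by
  rw [SZ, SZ, SZ, ← Finset.sum_add_distrib]
  refine Finset.sum_congr rfl fun x _ => ?_
  have h1 : (v.2 - w.2) x = v.2 x - w.2 x := rfl
  have h2 : w.2 x ≤ v.2 x := hle.2 x
  rw [h1]; omega

private lemma TS_below {c : Associates H} {Φ : Finset (Associates H)} :
    ∀ v ∈ TS c Φ, ∃ w, (w ∈ TS c Φ ∧ ∀ u ∈ TS c Φ, u ≤ w → u = w) ∧ w ≤ v := by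
  suffices h : ∀ n, ∀ v ∈ TS c Φ, v.1 + SZ Φ v.2 ≤ n →
      ∃ w, (w ∈ TS c Φ ∧ ∀ u ∈ TS c Φ, u ≤ w → u = w) ∧ w ≤ v by
    intro v hv
    exact h _ v hv le_rfl
  intro n
  induction n using Nat.strong_induction_on with
  | _ n ih =>
    intro v hv hn
    by_cases hmin : ∀ u ∈ TS c Φ, u ≤ v → u = v
    · exact ⟨v, ⟨hv, hmin⟩, le_rfl⟩
    · push_neg at hmin
      obtain ⟨u, hu, hule, hune⟩ := hmin
      have hm : u.1 + SZ Φ u.2 < n := lt_of_lt_of_le (measure_lt hule hune) hn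
      obtain ⟨w, hw, hwle⟩ := ih _ hm u hu le_rfl
      exact ⟨w, hw, le_trans hwle hule⟩

private lemma TS_bound_upper {c : Associates H} {Φ : Finset (Associates H)}
    (hΦ : ∀ x : Associates H, Irreducible x ↔ x ∈ Φ) (B τ : ℕ)
    (hB : ∀ w ∈ TS c Φ, (∀ u ∈ TS c Φ, u ≤ w → u = w) → SZ Φ w.2 * τ ≤ B * w.1) :
    ∀ v ∈ TS c Φ, SZ Φ v.2 * τ ≤ B * v.1 := by
  suffices h : ∀ n, ∀ v ∈ TS c Φ, v.1 + SZ Φ v.2 ≤ n → SZ Φ v.2 * τ ≤ B * v.1 by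
    intro v hv; exact h _ v hv le_rfl
  intro n
  induction n using Nat.strong_induction_on with
  | _ n ih =>
    intro v hv hn
    obtain ⟨⟨hwT, hwmin⟩, hwle⟩ := (TS_below v hv).choose_spec
    set w := (TS_below v hv).choose with hwdef
    by_cases heq : w = v
    · rw [← heq]; exact hB w hwT hwmin
    · have hsub : v - w ∈ TS c Φ := TS_sub hΦ hv hwT hwle heq
      have hm : (v - w).1 + SZ Φ (v - w).2 < n := by
        refine lt_of_lt_of_le ?_ hn
        have h1 : (v - w).1 = v.1 - w.1 := rfl
        have h2 : SZ Φ (v - w).2 ≤ SZ Φ v.2 :=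
          sum_le_sum_of_le (fun x => by
            show (v - w).2 x ≤ v.2 x
            have h3 : (v - w).2 x = v.2 x - w.2 x := rfl
            rw [h3]; omega)
        have hw1 : 1 ≤ w.1 := hwT.1
        have hv1 : w.1 ≤ v.1 := hwle.1
        have hv1' : 1 ≤ v.1 := hv.1
        omega
      have hIH : SZ Φ (v - w).2 * τ ≤ B * (v - w).1 := ih _ hm _ hsub le_rfl
      have hW : SZ Φ w.2 * τ ≤ B * w.1 := hB w hwT hwmin
      have hs : SZ Φ v.2 = SZ Φ w.2 + SZ Φ (v - w).2 := by
        have : (v - w).2 = v.2 - w.2 := rfl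
        rw [this]; exact sz_split hwle
      have h1 : v.1 = w.1 + (v - w).1 := by
        have hf : (v - w).1 = v.1 - w.1 := rfl
        have hg : w.1 ≤ v.1 := hwle.1
        rw [hf]; omega
      calc SZ Φ v.2 * τ = SZ Φ w.2 * τ + SZ Φ (v - w).2 * τ := by rw [hs, add_mul]
        _ ≤ B * w.1 + B * (v - w).1 := add_le_add hW hIH
        _ = B * v.1 := by rw [← mul_add, ← h1]

private lemma TS_bound_lower {c : Associates H} {Φ : Finset (Associates H)}
    (hΦ : ∀ x : Associates H, Irreducible x ↔ x ∈ Φ) (B τ : ℕ)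
    (hB : ∀ w ∈ TS c Φ, (∀ u ∈ TS c Φ, u ≤ w → u = w) → B * w.1 ≤ SZ Φ w.2 * τ) :
    ∀ v ∈ TS c Φ, B * v.1 ≤ SZ Φ v.2 * τ := by
  suffices h : ∀ n, ∀ v ∈ TS c Φ, v.1 + SZ Φ v.2 ≤ n → B * v.1 ≤ SZ Φ v.2 * τ by
    intro v hv; exact h _ v hv le_rfl
  intro n
  induction n using Nat.strong_induction_on with
  | _ n ih =>
    intro v hv hn
    obtain ⟨⟨hwT, hwmin⟩, hwle⟩ := (TS_below v hv).choose_spec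
    set w := (TS_below v hv).choose with hwdef
    by_cases heq : w = v
    · rw [← heq]; exact hB w hwT hwmin
    · have hsub : v - w ∈ TS c Φ := TS_sub hΦ hv hwT hwle heq
      have hm : (v - w).1 + SZ Φ (v - w).2 < n := by
        refine lt_of_lt_of_le ?_ hn
        have h1 : (v - w).1 = v.1 - w.1 := rfl
        have h2 : SZ Φ (v - w).2 ≤ SZ Φ v.2 :=
          sum_le_sum_of_le (fun x => by
            show (v - w).2 x ≤ v.2 x
            have h3 : (v - w).2 x = v.2 x - w.2 x := rfl
            rw [h3]; omega)
        have hw1 : 1 ≤ w.1 := hwT.1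
        have hv1 : w.1 ≤ v.1 := hwle.1
        have hv1' : 1 ≤ v.1 := hv.1
        omega
      have hIH : B * (v - w).1 ≤ SZ Φ (v - w).2 * τ := ih _ hm _ hsub le_rfl
      have hW : B * w.1 ≤ SZ Φ w.2 * τ := hB w hwT hwmin
      have hs : SZ Φ v.2 = SZ Φ w.2 + SZ Φ (v - w).2 := by
        have : (v - w).2 = v.2 - w.2 := rfl
        rw [this]; exact sz_split hwle
      have h1 : v.1 = w.1 + (v - w).1 := by
        have hf : (v - w).1 = v.1 - w.1 := rfl
        have hg : w.1 ≤ v.1 := hwle.1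
        rw [hf]; omega
      calc B * v.1 = B * w.1 + B * (v - w).1 := by rw [← mul_add, ← h1]
        _ ≤ SZ Φ w.2 * τ + SZ Φ (v - w).2 * τ := add_le_add hW hIH
        _ = SZ Φ v.2 * τ := by rw [hs, add_mul]

end Core

section Power

variable {H : Type*} [CancelCommMonoid H]

private lemma core_power (hfg : Monoid.FG (Associates H)) (c : Associates H)
    (hc : ¬ IsUnit c) :
    ∃ m : ℕ, 0 < m ∧ ∀ t : ℕ, 0 < t →
      sSup (lengthSet (Associates H) (c ^ (m * t))) =
        t * sSup (lengthSet (Associates H) (c ^ m)) ∧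
      sInf (lengthSet (Associates H) (c ^ (m * t))) =
        t * sInf (lengthSet (Associates H) (c ^ m)) := by
  classical
  obtain ⟨S, hS⟩ := Monoid.fg_def.mp hfg
  have hfin : {x : Associates H | Irreducible x}.Finite :=
    Set.Finite.subset S.finite_toSet (fun x hx => irreducible_mem_gen S hS hx)
  set Φ : Finset (Associates H) := hfin.toFinset with hΦdef
  have hΦ : ∀ x : Associates H, Irreducible x ↔ x ∈ Φ := fun x => by
    simp [hΦdef, Set.Finite.mem_toFinset]
  -- the length sets of powers of c, described by T
  have hpow_unit : ∀ n : ℕ, 1 ≤ n → ¬ IsUnit (c ^ n) := by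
    intro n hn hu
    exact hc ((isUnit_pow_iff (by omega)).mp hu)
  have hlen : ∀ n : ℕ, 1 ≤ n → ∀ k : ℕ,
      (k ∈ lengthSet (Associates H) (c ^ n) ↔
        ∃ e : {x // x ∈ Φ} → ℕ, ((n, e) : ℕ × ({x // x ∈ Φ} → ℕ)) ∈ TS c Φ ∧ SZ Φ e = k) := by
    intro n hn k
    rw [lengthSet_iff_expvec hΦ (hpow_unit n hn)]
    constructor
    · rintro ⟨e, he1, he2⟩
      exact ⟨e, ⟨hn, he1⟩, he2⟩
    · rintro ⟨e, ⟨_, he1⟩, he2⟩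
      exact ⟨e, he1, he2⟩
  -- T is nonempty
  obtain ⟨m0, hm0irr, hm0prod⟩ := assoc_atomic S hS c hc
  obtain ⟨e0, he01, he02⟩ := multiset_to_expvec Φ m0 (fun x hx => (hΦ x).mp (hm0irr x hx))
  have hv0 : ((1, e0) : ℕ × ({x // x ∈ Φ} → ℕ)) ∈ TS c Φ := by
    refine ⟨le_rfl, ?_⟩
    show EP Φ e0 = c ^ 1
    rw [EP, he01, hm0prod, pow_one]
  -- the set of minimal elements of T
  set MT : Set (ℕ × ({x // x ∈ Φ} → ℕ)) :=
    {w | w ∈ TS c Φ ∧ ∀ u ∈ TS c Φ, u ≤ w → u = w} with hMTdef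
  have hMTfin : MT.Finite := by
    haveI : IsWellOrder ℕ (· < ·) := isWellOrder_lt
    have h2 : (Set.univ : Set ({x // x ∈ Φ} → ℕ)).IsPWO := Set.isPWO_univ_iff.mpr inferInstance
    have h1 : (Set.univ : Set ℕ).IsPWO := (Set.isWF_univ_iff.mpr inferInstance).isPWO
    have hpwo : (Set.univ : Set (ℕ × ({x // x ∈ Φ} → ℕ))).IsPWO := by
      simpa [Set.univ_prod_univ] using h1.prod h2
    have hanti : IsAntichain (· ≤ ·) MT := by
      intro v hv w hw hne hle
      exact hne (hw.2 v hv.1 hle)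
    exact hanti.finite_of_partiallyWellOrderedOn (hpwo.mono (Set.subset_univ MT))
  have hMTne : ∃ w, w ∈ MT := by
    obtain ⟨w, hw, _⟩ := TS_below _ hv0
    exact ⟨w, hw⟩
  -- choose maximizer and minimizer of SZ w.2 / w.1 over MT
  obtain ⟨w0, hw0⟩ := hMTne
  have hMTFne : (hMTfin.toFinset).Nonempty := ⟨w0, hMTfin.mem_toFinset.mpr hw0⟩
  obtain ⟨wmax, hwmaxM, hwmax⟩ := Finset.exists_max_image hMTfin.toFinset
    (fun w => (SZ Φ w.2 : ℚ) / (w.1 : ℚ)) hMTFne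
  obtain ⟨wmin, hwminM, hwmin⟩ := Finset.exists_min_image hMTfin.toFinset
    (fun w => (SZ Φ w.2 : ℚ) / (w.1 : ℚ)) hMTFne
  rw [hMTfin.mem_toFinset] at hwmaxM hwminM
  have hwmaxT : wmax ∈ TS c Φ := hwmaxM.1
  have hwminT : wmin ∈ TS c Φ := hwminM.1
  have hτmax : 1 ≤ wmax.1 := hwmaxT.1
  have hτmin : 1 ≤ wmin.1 := hwminT.1
  -- cross-multiplied versions
  have hcross_max : ∀ w ∈ MT, SZ Φ w.2 * wmax.1 ≤ SZ Φ wmax.2 * w.1 := by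
    intro w hw
    have h1 := hwmax w (hMTfin.mem_toFinset.mpr hw)
    have hw1 : (0 : ℚ) < (w.1 : ℚ) := by exact_mod_cast lt_of_lt_of_le one_pos hw.1.1
    have hw2 : (0 : ℚ) < (wmax.1 : ℚ) := by exact_mod_cast lt_of_lt_of_le one_pos hτmax
    rw [div_le_div_iff₀ hw1 hw2] at h1
    exact_mod_cast h1
  have hcross_min : ∀ w ∈ MT, SZ Φ wmin.2 * w.1 ≤ SZ Φ w.2 * wmin.1 := by
    intro w hw
    have h1 := hwmin w (hMTfin.mem_toFinset.mpr hw)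
    have hw1 : (0 : ℚ) < (w.1 : ℚ) := by exact_mod_cast lt_of_lt_of_le one_pos hw.1.1
    have hw2 : (0 : ℚ) < (wmin.1 : ℚ) := by exact_mod_cast lt_of_lt_of_le one_pos hτmin
    rw [div_le_div_iff₀ hw2 hw1] at h1
    exact_mod_cast h1
  -- global bounds
  have hub : ∀ v ∈ TS c Φ, SZ Φ v.2 * wmax.1 ≤ SZ Φ wmax.2 * v.1 :=
    TS_bound_upper hΦ _ _ (fun w hwT hwmin' => hcross_max w ⟨hwT, hwmin'⟩)
  have hlb : ∀ v ∈ TS c Φ, SZ Φ wmin.2 * v.1 ≤ SZ Φ v.2 * wmin.1 :=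
    TS_bound_lower hΦ _ _ (fun w hwT hwmin' => hcross_min w ⟨hwT, hwmin'⟩)
  -- the period
  refine ⟨wmax.1 * wmin.1, Nat.mul_pos hτmax hτmin, ?_⟩
  set m : ℕ := wmax.1 * wmin.1 with hmdef
  -- supremum formula
  have hsup : ∀ t : ℕ, 1 ≤ t →
      sSup (lengthSet (Associates H) (c ^ (m * t))) = t * (wmin.1 * SZ Φ wmax.2) := by
    intro t ht
    have hmt : 1 ≤ m * t := Nat.mul_pos (Nat.mul_pos hτmax hτmin) ht
    apply IsGreatest.csSup_eq
    constructor
    · -- membership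
      rw [hlen (m * t) hmt]
      have hsm := TS_smul hwmaxT (t * wmin.1) (Nat.mul_pos ht hτmin)
      have hco : t * wmin.1 * wmax.1 = m * t := by rw [hmdef]; ring
      rw [hco] at hsm
      refine ⟨_, hsm, ?_⟩
      show (∑ x : {x // x ∈ Φ}, t * wmin.1 * wmax.2 x) = t * (wmin.1 * SZ Φ wmax.2)
      rw [← Finset.mul_sum]
      rw [SZ]
      ring
    · -- upper bound
      intro k hk
      rw [hlen (m * t) hmt] at hk
      obtain ⟨e, heT, hesz⟩ := hk
      have := hub _ heT
      simp only [SZ] at this hesz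
      rw [hesz] at this
      have hfin2 : k * wmax.1 ≤ (t * (wmin.1 * SZ Φ wmax.2)) * wmax.1 := by
        calc k * wmax.1 ≤ SZ Φ wmax.2 * (m * t) := this
          _ = (t * (wmin.1 * SZ Φ wmax.2)) * wmax.1 := by rw [hmdef]; ring
      exact Nat.le_of_mul_le_mul_right hfin2 (lt_of_lt_of_le one_pos hτmax)
  have hinf : ∀ t : ℕ, 1 ≤ t →
      sInf (lengthSet (Associates H) (c ^ (m * t))) = t * (wmax.1 * SZ Φ wmin.2) := by
    intro t ht
    have hmt : 1 ≤ m * t := Nat.mul_pos (Nat.mul_pos hτmax hτmin) ht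
    apply IsLeast.csInf_eq
    constructor
    · rw [hlen (m * t) hmt]
      have hsm := TS_smul hwminT (t * wmax.1) (Nat.mul_pos ht hτmax)
      have hco : t * wmax.1 * wmin.1 = m * t := by rw [hmdef]; ring
      rw [hco] at hsm
      refine ⟨_, hsm, ?_⟩
      show (∑ x : {x // x ∈ Φ}, t * wmax.1 * wmin.2 x) = t * (wmax.1 * SZ Φ wmin.2)
      rw [← Finset.mul_sum, SZ]
      ring
    · intro k hk
      rw [hlen (m * t) hmt] at hk
      obtain ⟨e, heT, hesz⟩ := hk
      have := hlb _ heT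
      simp only [SZ] at this hesz
      rw [hesz] at this
      have hfin2 : (t * (wmax.1 * SZ Φ wmin.2)) * wmin.1 ≤ k * wmin.1 := by
        calc (t * (wmax.1 * SZ Φ wmin.2)) * wmin.1 = SZ Φ wmin.2 * (m * t) := by
              rw [hmdef]; ring
          _ ≤ k * wmin.1 := this
      exact Nat.le_of_mul_le_mul_right hfin2 (lt_of_lt_of_le one_pos hτmin)
  intro t ht
  have h1 : m = m * 1 := by ring
  constructor
  · rw [hsup t ht]
    conv_rhs => rw [h1, hsup 1 le_rfl]
    ring
  · rw [hinf t ht]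
    conv_rhs => rw [h1, hinf 1 le_rfl]
    ring

end Power

section Transfer

variable {H : Type*} [CancelCommMonoid H]

private lemma mk_prod {n : ℕ} (g : Fin n → H) :
    Associates.mk (∏ i, g i) = ∏ i, Associates.mk (g i) := by
  have : Associates.mk (∏ i, g i) = Associates.mkMonoidHom (∏ i, g i) := rfl
  rw [this, map_prod]
  rfl

private lemma irr_mk {a : H} : Irreducible (Associates.mk a) ↔ Irreducible a := by
  constructor
  · intro h
    refine ⟨fun hu => h.not_isUnit (Associates.isUnit_mk.mpr hu), fun b c hbc => ?_⟩
    have := h.isUnit_or_isUnit (by rw [hbc, Associates.mk_mul_mk])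
    rcases this with h' | h'
    · exact Or.inl (Associates.isUnit_mk.mp h')
    · exact Or.inr (Associates.isUnit_mk.mp h')
  · intro h
    refine ⟨fun hu => h.not_isUnit (Associates.isUnit_mk.mp hu), fun u v huv => ?_⟩
    obtain ⟨b, rfl⟩ := Associates.mk_surjective u
    obtain ⟨c, rfl⟩ := Associates.mk_surjective v
    rw [Associates.mk_mul_mk, Associates.mk_eq_mk_iff_associated] at huv
    obtain ⟨w, hw⟩ := huv.symm
    rcases h.isUnit_or_isUnit (show a = b * (c * ↑w) by rw [← mul_assoc, hw]) with h' | h'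
    · exact Or.inl (Associates.isUnit_mk.mpr h')
    · exact Or.inr (Associates.isUnit_mk.mpr (isUnit_of_mul_isUnit_left h'))

private lemma lengthSet_mk (d : H) :
    lengthSet (Associates H) (Associates.mk d) = lengthSet H d := by
  classical
  by_cases hd : IsUnit d
  · rw [lengthSet, lengthSet, if_pos (Associates.isUnit_mk.mpr hd), if_pos hd]
  · rw [lengthSet, lengthSet, if_neg (fun h => hd (Associates.isUnit_mk.mp h)), if_neg hd]
    ext k
    simp only [Set.mem_setOf_eq]
    constructor
    · rintro ⟨f, hfirr, hfprod⟩
      have hgex : ∀ i, ∃ g : H, Associates.mk g = f i := fun i => Associates.mk_surjective (f i)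
      choose g hg using hgex
      have hgirr : ∀ i, Irreducible (g i) := fun i => by
        have : Irreducible (Associates.mk (g i)) := by rw [hg i]; exact hfirr i
        exact irr_mk.mp this
      have hmkprod : Associates.mk d = Associates.mk (∏ i, g i) := by
        rw [hfprod, mk_prod g]
        exact Finset.prod_congr rfl fun i _ => (hg i).symm
      obtain ⟨u, hu⟩ := Associates.mk_eq_mk_iff_associated.mp hmkprod.symm
      have hk : k ≠ 0 := by
        rintro rfl
        exact hd (Associates.mk_eq_one.mp (by rw [hfprod, Finset.univ_eq_empty, Finset.prod_empty]))
      have hk0 : 0 < k := Nat.pos_of_ne_zero hk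
      set i0 : Fin k := ⟨0, hk0⟩
      refine ⟨Function.update g i0 (g i0 * ↑u), fun i => ?_, ?_⟩
      · rcases eq_or_ne i i0 with rfl | hne
        · rw [Function.update_self]
          exact (associated_mul_unit_right (g i0) _ u.isUnit).irreducible (hgirr i0)
        · rw [Function.update_of_ne hne]
          exact hgirr i
      · rw [Finset.prod_update_of_mem (Finset.mem_univ i0), ← hu,
          ← Finset.mul_prod_erase Finset.univ g (Finset.mem_univ i0)]
        simp [Finset.sdiff_singleton_eq_erase, mul_comm, mul_assoc, mul_left_comm]
    · rintro ⟨f, hfirr, hfprod⟩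
      refine ⟨fun i => Associates.mk (f i), fun i =>
        (show Irreducible (Associates.mk (f i)) from irr_mk.mpr (hfirr i)), ?_⟩
      rw [hfprod, mk_prod f]

end Transfer

/-- If `H_red = H/H^×` is finitely generated, `a, b ∈ H` are nonunits
and `x ∈ ℚ` with `x ≥ 0`, then there is a nice pair `(k', ℓ')` with respect to `(a, b)`
with `k' ∈ ℕ`, `ℓ' ∈ ℕ₀` and `ℓ'/k' = x`. -/
theorem statement13 (H : Type*) [CancelCommMonoid H]
    (hfg : Monoid.FG (Associates H)) (a b : H) (ha : ¬ IsUnit a) (hb : ¬ IsUnit b)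
    (x : ℚ) (hx : 0 ≤ x) :
    ∃ (k ℓ : ℕ), 0 < k ∧ IsNicePair H a b k ℓ ∧ (ℓ : ℚ) / (k : ℚ) = x := by
  set q : ℕ := x.den with hqdef
  set p : ℕ := x.num.toNat with hpdef
  have hq : 0 < q := x.pos
  have hnum : (p : ℤ) = x.num := Int.toNat_of_nonneg (Rat.num_nonneg.mpr hx)
  set c : Associates H := Associates.mk a ^ q * Associates.mk b ^ p with hcdef
  have hc : ¬ IsUnit c := by
    intro h
    have h1 : IsUnit (Associates.mk a ^ q) := isUnit_of_mul_isUnit_left h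
    have h2 : IsUnit (Associates.mk a) := (isUnit_pow_iff (Nat.pos_iff_ne_zero.mp hq)).mp h1
    exact ha (Associates.isUnit_mk.mp h2)
  obtain ⟨m, hm, hspec⟩ := core_power hfg c hc
  refine ⟨m * q, m * p, Nat.mul_pos hm hq, ?_, ?_⟩
  · -- IsNicePair
    have key : ∀ s : ℕ, Associates.mk ((a ^ (m * q) * b ^ (m * p)) ^ s) = c ^ (m * s) := by
      intro s
      have hbase : Associates.mk (a ^ (m * q) * b ^ (m * p)) = c ^ m := by
        rw [← Associates.mk_mul_mk, Associates.mk_pow, Associates.mk_pow, hcdef,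
          mul_pow, ← pow_mul, ← pow_mul, mul_comm q m, mul_comm p m]
      rw [Associates.mk_pow, hbase, ← pow_mul]
    refine ⟨fun h => (Nat.mul_pos hm hq).ne' h.1, fun t ht => ?_⟩
    have h1 : lengthSet H ((a ^ (m * q) * b ^ (m * p)) ^ t) =
        lengthSet (Associates H) (c ^ (m * t)) := by
      rw [← lengthSet_mk, key t]
    have h2 : lengthSet H (a ^ (m * q) * b ^ (m * p)) =
        lengthSet (Associates H) (c ^ m) := by
      rw [← lengthSet_mk, ← pow_one (a ^ (m * q) * b ^ (m * p)), key 1, mul_one]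
    rw [h1, h2]
    exact hspec t ht
  · -- the ratio
    have hm0 : (m : ℚ) ≠ 0 := by exact_mod_cast hm.ne'
    have hpq : (p : ℚ) / (q : ℚ) = x := by
      rw [← Rat.num_div_den x]
      congr 1
      · exact_mod_cast hnum
    push_cast
    rw [mul_div_mul_left _ _ hm0]
    exact hpq
end

section
/- Let (H_i)_{i∈ℕ} be a family of BF-monoids all having the same elasticity r = ρ(H_i). Then the coproduct H = ∐_{i=1}^{∞} H_i is fully elastic: for every rational q with 1 < q < ρ(H) there exists a ∈ H with ρ(a) = q. -/
open Filter Topology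

/-- The coproduct `∐_{i ∈ ℕ} H i`: the submonoid of the direct product consisting of
families with all but finitely many components equal to `1`. -/
def coprodSubmonoid (H : ℕ → Type*) [∀ i, CancelCommMonoid (H i)] :
    Submonoid (∀ i, H i) where
  carrier := {f : ∀ i, H i | {i : ℕ | f i ≠ 1}.Finite}
  one_mem' := by simp
  mul_mem' := by
    intro f g hf hg
    refine (Set.Finite.union hf hg).subset ?_
    intro i hi
    by_contra hcon
    simp only [Set.mem_union, Set.mem_setOf_eq, not_or, not_not, ne_eq] at hcon
    exact hi (by show f i * g i = 1; rw [hcon.1, hcon.2, one_mul])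

noncomputable instance (H : ℕ → Type*) [∀ i, CancelCommMonoid (H i)] :
    CancelCommMonoid (coprodSubmonoid H) :=
  Function.Injective.cancelCommMonoid (Subtype.val : coprodSubmonoid H → ∀ i, H i)
    Subtype.coe_injective rfl (fun _ _ => rfl) (fun _ _ => rfl)

section General
variable {M : Type*} [CommMonoid M]

theorem lengthSet_of_isUnit {a : M} (h : IsUnit a) : lengthSet M a = {0} := if_pos h

theorem lengthSet_of_not_isUnit {a : M} (h : ¬ IsUnit a) :
    lengthSet M a = {k | ∃ f : Fin k → M, (∀ i, Irreducible (f i)) ∧ a = ∏ i, f i} := if_neg h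

theorem isUnit_of_isUnit_prod {ι : Type*} {s : Finset ι} {f : ι → M} (h : IsUnit (∏ i ∈ s, f i))
    {i : ι} (hi : i ∈ s) : IsUnit (f i) := by
  classical
  rw [← Finset.prod_erase_mul s f hi] at h
  exact isUnit_of_mul_isUnit_right h

theorem isUnit_of_isUnit_prod_fin {k : ℕ} {f : Fin k → M} (h : IsUnit (∏ i, f i))
    (i : Fin k) : IsUnit (f i) := isUnit_of_isUnit_prod h (Finset.mem_univ i)

theorem zero_not_mem_lengthSet {a : M} (h : ¬ IsUnit a) : 0 ∉ lengthSet M a := by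
  rw [lengthSet_of_not_isUnit h]
  rintro ⟨f, -, hf⟩
  simp at hf
  exact h (hf ▸ isUnit_one)

theorem mem_lengthSet_of_factorization {a : M} {k : ℕ} (hk : k ≠ 0) (f : Fin k → M)
    (hf : ∀ i, Irreducible (f i)) (ha : a = ∏ i, f i) : k ∈ lengthSet M a := by
  have hnu : ¬ IsUnit a := fun hu => (hf ⟨0, Nat.pos_of_ne_zero hk⟩).not_isUnit
    (isUnit_of_isUnit_prod_fin (ha ▸ hu) _)
  rw [lengthSet_of_not_isUnit hnu]
  exact ⟨f, hf, ha⟩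

theorem lengthSet_nonempty_of_mul {a : M} (h : ¬ IsUnit a) :
    ∀ k ∈ lengthSet M a, 1 ≤ k := by
  intro k hk
  rcases Nat.eq_zero_or_pos k with h0 | h1
  · exact absurd (h0 ▸ hk) (zero_not_mem_lengthSet h)
  · exact h1

/-- absorbing a unit doesn't change the length set -/
theorem lengthSet_unit_mul {u : M} (hu : IsUnit u) (a : M) :
    lengthSet M (u * a) = lengthSet M a := by
  have key : ∀ v b : M, IsUnit v → lengthSet M b ⊆ lengthSet M (v * b) := by
    intro v b hv k hk
    by_cases hb : IsUnit b
    · rw [lengthSet_of_isUnit hb] at hk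
      rw [lengthSet_of_isUnit (hv.mul hb)]
      exact hk
    · rw [lengthSet_of_not_isUnit hb] at hk
      obtain ⟨f, hf, hbf⟩ := hk
      rcases Nat.eq_zero_or_pos k with rfl | hk1
      · simp at hbf; exact absurd (hbf ▸ isUnit_one) hb
      · classical
        set i0 : Fin k := ⟨0, hk1⟩
        set g : Fin k → M := Function.update f i0 (v * f i0) with hg
        refine mem_lengthSet_of_factorization hk1.ne' g (fun i => ?_) ?_
        · by_cases h0 : i = i0
          · rw [h0, hg, Function.update_self]
            exact (irreducible_isUnit_mul hv).mpr (hf _)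
          · rw [hg, Function.update_of_ne h0]
            exact hf i
        · rw [hbf, hg, Finset.prod_update_of_mem (Finset.mem_univ i0), mul_assoc,
            ← Finset.prod_eq_mul_prod_sdiff_singleton_of_mem (Finset.mem_univ i0) f]
  ext k
  constructor
  · intro hk
    have := key _ _ hu.unit⁻¹.isUnit hk
    rwa [← mul_assoc, IsUnit.val_inv_mul, one_mul] at this
  · exact fun hk => key _ _ hu hk

theorem lengthSet_irreducible {a : M} (h : Irreducible a) : lengthSet M a = {1} := by
  ext k
  rw [lengthSet_of_not_isUnit h.not_isUnit]
  simp only [Set.mem_setOf_eq, Set.mem_singleton_iff]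
  constructor
  · rintro ⟨f, hf, haf⟩
    match k, f, hf, haf with
    | 0, f, hf, haf => simp at haf; exact absurd (haf ▸ isUnit_one) h.not_isUnit
    | 1, f, hf, haf => rfl
    | (k+2), f, hf, haf =>
      exfalso
      rw [Fin.prod_univ_succ] at haf
      rcases h.isUnit_or_isUnit haf with hu | hu
      · exact (hf 0).not_isUnit hu
      · exact (hf 1).not_isUnit (by simpa using isUnit_of_isUnit_prod_fin hu 0)
  · rintro rfl
    exact ⟨fun _ => a, fun _ => h, by simp⟩

end General


section Coprod
variable {H : ℕ → Type*} [∀ i, CancelCommMonoid (H i)]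

/-- evaluation at a coordinate, as a monoid hom -/
def evalG (j : ℕ) : coprodSubmonoid H →* H j where
  toFun c := c.1 j
  map_one' := rfl
  map_mul' _ _ := rfl

theorem cp_mul_apply (c d : coprodSubmonoid H) (j : ℕ) : (c * d).1 j = c.1 j * d.1 j := rfl
theorem cp_one_apply (j : ℕ) : (1 : coprodSubmonoid H).1 j = 1 := rfl

theorem cp_prod_apply {ι : Type*} (s : Finset ι) (f : ι → coprodSubmonoid H) (j : ℕ) :
    (∏ i ∈ s, f i).1 j = ∏ i ∈ s, (f i).1 j := map_prod (evalG j) f s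

theorem coprod_isUnit_iff (c : coprodSubmonoid H) : IsUnit c ↔ ∀ i, IsUnit (c.1 i) := by
  constructor
  · intro h i
    exact h.map (evalG i)
  · intro h
    classical
    rw [isUnit_iff_exists_inv]
    refine ⟨⟨fun i => if c.1 i = 1 then 1 else ((h i).unit⁻¹ : (H i)ˣ), ?_⟩, ?_⟩
    · refine c.2.subset fun i hi => ?_
      simp only [Set.mem_setOf_eq] at hi ⊢
      intro hc
      exact hi (by rw [if_pos hc])
    · apply Subtype.ext
      funext i
      show c.1 i * (if c.1 i = 1 then (1 : H i) else ((h i).unit⁻¹ : (H i)ˣ)) = 1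
      by_cases hc : c.1 i = 1
      · rw [if_pos hc, hc, one_mul]
      · rw [if_neg hc]
        exact (h i).mul_val_inv

/-- the inclusion of a component, as a function -/
noncomputable def iota (j : ℕ) (x : H j) : coprodSubmonoid H :=
  ⟨Function.update 1 j x, Set.Finite.subset (Set.finite_singleton j) (by
    intro i hi
    simp only [Set.mem_setOf_eq] at hi
    by_contra hij
    exact hi (by rw [Function.update_of_ne hij]; rfl))⟩

theorem iota_apply_self (j : ℕ) (x : H j) : (iota (H := H) j x).1 j = x :=
  Function.update_self j x 1

theorem iota_apply_ne (j : ℕ) (x : H j) {i : ℕ} (h : i ≠ j) : (iota (H := H) j x).1 i = 1 := by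
  show Function.update (1 : ∀ i, H i) j x i = 1
  rw [Function.update_of_ne h]; rfl

theorem iota_mul (j : ℕ) (x y : H j) :
    iota (H := H) j (x * y) = iota j x * iota j y := by
  apply Subtype.ext
  funext i
  show Function.update (1 : ∀ i, H i) j (x * y) i = _
  rw [cp_mul_apply]
  by_cases h : i = j
  · subst h; rw [Function.update_self, iota_apply_self, iota_apply_self]
  · rw [Function.update_of_ne h, iota_apply_ne _ _ h, iota_apply_ne _ _ h, one_mul]
    rfl

/-- iota as a monoid hom -/
noncomputable def iotaHom (j : ℕ) : H j →* coprodSubmonoid H where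
  toFun := iota j
  map_one' := by
    apply Subtype.ext
    funext i
    show Function.update (1 : ∀ i, H i) j 1 i = (1 : H i)
    by_cases h : i = j
    · subst h; rw [Function.update_self]
    · rw [Function.update_of_ne h]; rfl
  map_mul' := iota_mul j

theorem isUnit_iota_iff (j : ℕ) (x : H j) : IsUnit (iota (H := H) j x) ↔ IsUnit x := by
  constructor
  · intro h
    have := h.map (evalG j)
    rwa [show evalG j (iota (H := H) j x) = x from iota_apply_self j x] at this
  · intro h
    rw [coprod_isUnit_iff]
    intro i
    by_cases hij : i = j
    · subst hij; rw [iota_apply_self]; exact h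
    · rw [iota_apply_ne _ _ hij]; exact isUnit_one

theorem irreducible_iota {j : ℕ} {x : H j} (h : Irreducible x) :
    Irreducible (iota (H := H) j x) := by
  constructor
  · rw [isUnit_iota_iff]; exact h.not_isUnit
  · intro a b hab
    have hj : x = a.1 j * b.1 j := by
      rw [← cp_mul_apply, ← hab, iota_apply_self]
    have hother : ∀ i, i ≠ j → a.1 i * b.1 i = 1 := by
      intro i hi
      rw [← cp_mul_apply, ← hab, iota_apply_ne _ _ hi]
    rcases h.isUnit_or_isUnit hj with hu | hu
    · left
      rw [coprod_isUnit_iff]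
      intro i
      by_cases hij : i = j
      · subst hij; exact hu
      · exact IsUnit.of_mul_eq_one _ (hother i hij)
    · right
      rw [coprod_isUnit_iff]
      intro i
      by_cases hij : i = j
      · subst hij; exact hu
      · exact IsUnit.of_mul_eq_one _ (mul_comm (a.1 i) (b.1 i) ▸ hother i hij)

/-- an atom of the coproduct has a unique non-unit component -/
theorem atom_unique_component {c : coprodSubmonoid H} (hc : Irreducible c) {i j : ℕ}
    (hi : ¬ IsUnit (c.1 i)) (hj : ¬ IsUnit (c.1 j)) : i = j := by
  classical
  by_contra hij
  set a : coprodSubmonoid H := iota i (c.1 i) with ha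
  set b : coprodSubmonoid H := ⟨Function.update c.1 i 1, Set.Finite.subset c.2 (by
    intro k hk
    simp only [Set.mem_setOf_eq] at hk ⊢
    intro h1
    by_cases hki : k = i
    · subst hki; exact hk (Function.update_self _ _ _)
    · exact hk (by rw [Function.update_of_ne hki]; exact h1))⟩ with hb
  have hab : c = a * b := by
    apply Subtype.ext
    funext k
    rw [cp_mul_apply]
    by_cases hki : k = i
    · subst hki
      show c.1 k = (iota k (c.1 k)).1 k * Function.update c.1 k 1 k
      rw [iota_apply_self, Function.update_self, mul_one]
    · show c.1 k = (iota i (c.1 i)).1 k * Function.update c.1 i 1 k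
      rw [iota_apply_ne _ _ hki, Function.update_of_ne hki, one_mul]
  rcases hc.isUnit_or_isUnit hab with hu | hu
  · rw [ha, isUnit_iota_iff] at hu
    exact hi hu
  · apply hj
    have := hu.map (evalG (H := H) j)
    show IsUnit (c.1 j)
    have hbj : b.1 j = c.1 j := Function.update_of_ne (fun h => hij h.symm) _ _
    rwa [show evalG (H := H) j b = b.1 j from rfl, hbj] at this

/-- the non-unit component of an atom of the coproduct is irreducible -/
theorem atom_component_irreducible {c : coprodSubmonoid H} (hc : Irreducible c) {i : ℕ}
    (hi : ¬ IsUnit (c.1 i)) : Irreducible (c.1 i) := by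
  classical
  constructor
  · exact hi
  · intro x y hxy
    set a : coprodSubmonoid H := iota i x with ha
    set b : coprodSubmonoid H := ⟨Function.update c.1 i y, Set.Finite.subset
      (c.2.union (Set.finite_singleton i)) (by
        intro k hk
        simp only [Set.mem_setOf_eq, Set.mem_union, Set.mem_singleton_iff] at hk ⊢
        by_cases hki : k = i
        · right; exact hki
        · left; rwa [Function.update_of_ne hki] at hk)⟩ with hb
    have hab : c = a * b := by
      apply Subtype.ext
      funext k
      rw [cp_mul_apply]
      by_cases hki : k = i
      · subst hki
        show c.1 k = (iota k x).1 k * Function.update c.1 k y k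
        rw [iota_apply_self, Function.update_self, ← hxy]
      · show c.1 k = (iota i x).1 k * Function.update c.1 i y k
        rw [iota_apply_ne _ _ hki, Function.update_of_ne hki, one_mul]
    rcases hc.isUnit_or_isUnit hab with hu | hu
    · left
      rwa [ha, isUnit_iota_iff] at hu
    · right
      have := hu.map (evalG (H := H) i)
      rwa [show evalG (H := H) i b = Function.update c.1 i y i from rfl,
        Function.update_self] at this

theorem isUnit_prod_of {M : Type*} [CommMonoid M] {ι : Type*} {s : Finset ι} {f : ι → M}
    (h : ∀ i ∈ s, IsUnit (f i)) : IsUnit (∏ i ∈ s, f i) :=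
  Finset.prod_induction f IsUnit (fun _ _ ha hb => ha.mul hb) isUnit_one h

/-- decomposition of length sets in the coproduct -/
theorem lengthSet_decompose (c : coprodSubmonoid H) (S : Finset ℕ)
    (hS : ∀ i ∉ S, c.1 i = 1) {k : ℕ} (hk : k ∈ lengthSet (coprodSubmonoid H) c) :
    ∃ κ : ℕ → ℕ, (∀ i, κ i ∈ lengthSet (H i) (c.1 i)) ∧ k = ∑ i ∈ S, κ i := by
  classical
  by_cases hu : IsUnit c
  · rw [lengthSet_of_isUnit hu] at hk
    have hk0 : k = 0 := by simpa using hk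
    refine ⟨fun _ => 0, fun i => ?_, by simp [hk0]⟩
    rw [lengthSet_of_isUnit ((coprod_isUnit_iff c).mp hu i)]
    rfl
  · rw [lengthSet_of_not_isUnit hu] at hk
    obtain ⟨f, hf, hcf⟩ := hk
    have hnu : ∀ t : Fin k, ∃ i, ¬ IsUnit ((f t).1 i) := by
      intro t
      by_contra hcon
      push_neg at hcon
      exact (hf t).not_isUnit ((coprod_isUnit_iff (f t)).mpr hcon)
    choose idx hidx using hnu
    have hcomp : ∀ j, c.1 j = ∏ t : Fin k, (f t).1 j := by
      intro j
      rw [hcf, cp_prod_apply]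
    have hidxS : ∀ t : Fin k, idx t ∈ S := by
      intro t
      by_contra hcon
      have h1 : c.1 (idx t) = 1 := hS _ hcon
      have := hcomp (idx t)
      rw [h1] at this
      exact hidx t (isUnit_of_isUnit_prod_fin (this ▸ isUnit_one) t)
    refine ⟨fun i => (Finset.univ.filter fun t => idx t = i).card, fun i => ?_, ?_⟩
    · -- membership
      have hsplit : c.1 i = (∏ t ∈ Finset.univ.filter (fun t => idx t = i), (f t).1 i) *
          ∏ t ∈ Finset.univ.filter (fun t => ¬ idx t = i), (f t).1 i := by
        rw [hcomp i, Finset.prod_filter_mul_prod_filter_not]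
      have hU : IsUnit (∏ t ∈ Finset.univ.filter (fun t => ¬ idx t = i), (f t).1 i) := by
        refine isUnit_prod_of fun t ht => ?_
        simp only [Finset.mem_filter] at ht
        by_contra hcon
        exact ht.2 (atom_unique_component (hf t) (hidx t) hcon)
      rw [hsplit, mul_comm, lengthSet_unit_mul hU]
      rcases Finset.eq_empty_or_nonempty (Finset.univ.filter (fun t => idx t = i)) with he | hne
      · show (Finset.univ.filter fun t => idx t = i).card ∈ lengthSet (H i) _
        rw [he, Finset.card_empty, Finset.prod_empty, lengthSet_of_isUnit isUnit_one]
        rfl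
      · have hcard : (Finset.univ.filter (fun t => idx t = i)).card ≠ 0 :=
          Finset.card_ne_zero.mpr hne
        refine mem_lengthSet_of_factorization hcard
          (fun n => (f ((Finset.univ.filter (fun t => idx t = i)).equivFin.symm n).1).1 i)
          (fun n => ?_) ?_
        · have h2 : idx ((Finset.univ.filter (fun t => idx t = i)).equivFin.symm n).1 = i :=
            (Finset.mem_filter.mp
              ((Finset.univ.filter (fun t => idx t = i)).equivFin.symm n).2).2
          have h3 := atom_component_irreducible
            (hf ((Finset.univ.filter (fun t => idx t = i)).equivFin.symm n).1)
            (hidx ((Finset.univ.filter (fun t => idx t = i)).equivFin.symm n).1)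
          rw [h2] at h3
          exact h3
        · rw [← Finset.prod_coe_sort (Finset.univ.filter (fun t => idx t = i))
            (fun t => (f t).1 i)]
          exact (Equiv.prod_comp (Finset.univ.filter (fun t => idx t = i)).equivFin.symm
            (fun t => (f t.1).1 i)).symm
    · -- the count
      calc k = (Finset.univ : Finset (Fin k)).card := by simp
      _ = ∑ i ∈ S, (Finset.univ.filter fun t => idx t = i).card :=
        Finset.card_eq_sum_card_fiberwise fun t _ => hidxS t

theorem lengthSet_iota (j : ℕ) (x : H j) :
    lengthSet (coprodSubmonoid H) (iota j x) = lengthSet (H j) x := by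
  by_cases hx : IsUnit x
  · rw [lengthSet_of_isUnit hx, lengthSet_of_isUnit ((isUnit_iota_iff j x).mpr hx)]
  · have hix : ¬ IsUnit (iota (H := H) j x) := fun h => hx ((isUnit_iota_iff j x).mp h)
    ext k
    constructor
    · intro hk
      obtain ⟨κ, hκ, hsum⟩ := lengthSet_decompose (iota j x) {j}
        (fun i hi => iota_apply_ne j x (by simpa using hi)) hk
      have := hκ j
      rw [iota_apply_self] at this
      rw [Finset.sum_singleton] at hsum
      rw [hsum]
      exact this
    · intro hk
      rw [lengthSet_of_not_isUnit hx] at hk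
      obtain ⟨f, hf, hxf⟩ := hk
      have hk0 : k ≠ 0 := by
        rintro rfl
        simp at hxf
        exact hx (hxf ▸ isUnit_one)
      refine mem_lengthSet_of_factorization hk0 (fun t => iota j (f t))
        (fun t => irreducible_iota (hf t)) ?_
      show iotaHom (H := H) j x = ∏ t, iotaHom (H := H) j (f t)
      rw [← map_prod, ← hxf]

/-- binary composition : prepending an `iota` factor -/
theorem mem_lengthSet_iota_mul {j : ℕ} {x : H j} {b : coprodSubmonoid H} (_hb : b.1 j = 1)
    {k₁ k₂ : ℕ} (h1 : k₁ ∈ lengthSet (H j) x) (h2 : k₂ ∈ lengthSet (coprodSubmonoid H) b) :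
    k₁ + k₂ ∈ lengthSet (coprodSubmonoid H) (iota j x * b) := by
  by_cases hx : IsUnit x
  · rw [lengthSet_of_isUnit hx] at h1
    have hk1 : k₁ = 0 := by simpa using h1
    rw [hk1, zero_add, lengthSet_unit_mul ((isUnit_iota_iff j x).mpr hx)]
    exact h2
  · by_cases hbu : IsUnit b
    · rw [lengthSet_of_isUnit hbu] at h2
      have hk2 : k₂ = 0 := by simpa using h2
      rw [hk2, add_zero, mul_comm, lengthSet_unit_mul hbu, lengthSet_iota]
      exact h1
    · rw [lengthSet_of_not_isUnit hx] at h1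
      rw [lengthSet_of_not_isUnit hbu] at h2
      obtain ⟨f, hf, hxf⟩ := h1
      obtain ⟨g, hg, hbg⟩ := h2
      have hk1 : k₁ ≠ 0 := by
        rintro rfl
        simp at hxf
        exact hx (hxf ▸ isUnit_one)
      refine mem_lengthSet_of_factorization (by omega) (Fin.append (fun t => iota j (f t)) g)
        (fun t => ?_) ?_
      · refine Fin.addCases (fun t => ?_) (fun t => ?_) t
        · rw [Fin.append_left]
          exact irreducible_iota (hf t)
        · rw [Fin.append_right]
          exact hg t
      · rw [Fin.prod_univ_add]
        simp only [Fin.append_left, Fin.append_right]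
        show iotaHom (H := H) j x * b = (∏ t, iotaHom (H := H) j (f t)) * ∏ t, g t
        rw [← map_prod, ← hxf, ← hbg]

/-- composing length sets in the coproduct -/
theorem lengthSet_compose (S : Finset ℕ) (c : coprodSubmonoid H)
    (hS : ∀ i ∉ S, c.1 i = 1) (κ : ℕ → ℕ) (hκ : ∀ i ∈ S, κ i ∈ lengthSet (H i) (c.1 i)) :
    (∑ i ∈ S, κ i) ∈ lengthSet (coprodSubmonoid H) c := by
  classical
  induction S using Finset.induction_on generalizing c with
  | empty =>
    have hc : c = 1 := Subtype.ext (funext fun i => hS i (Finset.notMem_empty i))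
    rw [hc, Finset.sum_empty, lengthSet_of_isUnit isUnit_one]
    rfl
  | @insert j S hj ih =>
    set c' : coprodSubmonoid H := ⟨Function.update c.1 j 1, Set.Finite.subset c.2 (by
      intro i hi
      simp only [Set.mem_setOf_eq] at hi ⊢
      intro h1
      by_cases hij : i = j
      · subst hij; exact hi (Function.update_self _ _ _)
      · exact hi (by rw [Function.update_of_ne hij]; exact h1))⟩ with hc'
    have hcc : c = iota j (c.1 j) * c' := by
      apply Subtype.ext
      funext i
      rw [cp_mul_apply]
      by_cases hij : i = j
      · subst hij
        show c.1 i = (iota i (c.1 i)).1 i * Function.update c.1 i 1 i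
        rw [iota_apply_self, Function.update_self, mul_one]
      · show c.1 i = (iota j (c.1 j)).1 i * Function.update c.1 j 1 i
        rw [iota_apply_ne _ _ hij, Function.update_of_ne hij, one_mul]
    have hc'j : c'.1 j = 1 := Function.update_self _ _ _
    have hS' : ∀ i ∉ S, c'.1 i = 1 := by
      intro i hi
      by_cases hij : i = j
      · subst hij; exact hc'j
      · show Function.update c.1 j 1 i = 1
        rw [Function.update_of_ne hij]
        exact hS i (by simp [hi, hij])
    have hκ' : ∀ i ∈ S, κ i ∈ lengthSet (H i) (c'.1 i) := by
      intro i hi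
      have hij : i ≠ j := fun h => hj (h ▸ hi)
      show κ i ∈ lengthSet (H i) (Function.update c.1 j 1 i)
      rw [Function.update_of_ne hij]
      exact hκ i (Finset.mem_insert_of_mem hi)
    rw [Finset.sum_insert hj, hcc]
    exact mem_lengthSet_iota_mul hc'j (hκ j (Finset.mem_insert_self j S)) (ih c' hS' hκ')

theorem lengthSet_nonempty {M : Type*} [CommMonoid M] (hM : IsBFMonoid M) (a : M) :
    (lengthSet M a).Nonempty := by
  by_cases h : IsUnit a
  · rw [lengthSet_of_isUnit h]; exact ⟨0, rfl⟩
  · exact hM.1 a h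

theorem sSup_lengthSet_coprod (hbf : ∀ i, IsBFMonoid (H i)) (c : coprodSubmonoid H)
    (S : Finset ℕ) (hS : ∀ i ∉ S, c.1 i = 1) :
    sSup (lengthSet (coprodSubmonoid H) c) = ∑ i ∈ S, sSup (lengthSet (H i) (c.1 i)) ∧
    sInf (lengthSet (coprodSubmonoid H) c) = ∑ i ∈ S, sInf (lengthSet (H i) (c.1 i)) := by
  have hne : ∀ i, (lengthSet (H i) (c.1 i)).Nonempty := fun i => lengthSet_nonempty (hbf i) _
  have hfin : ∀ i, (lengthSet (H i) (c.1 i)).Finite := fun i => (hbf i).2 _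
  have hmax : ∀ i, sSup (lengthSet (H i) (c.1 i)) ∈ lengthSet (H i) (c.1 i) :=
    fun i => Nat.sSup_mem (hne i) (hfin i).bddAbove
  have hmin : ∀ i, sInf (lengthSet (H i) (c.1 i)) ∈ lengthSet (H i) (c.1 i) :=
    fun i => Nat.sInf_mem (hne i)
  have hmemM : (∑ i ∈ S, sSup (lengthSet (H i) (c.1 i))) ∈ lengthSet (coprodSubmonoid H) c :=
    lengthSet_compose S c hS _ (fun i _ => hmax i)
  have hmemm : (∑ i ∈ S, sInf (lengthSet (H i) (c.1 i))) ∈ lengthSet (coprodSubmonoid H) c :=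
    lengthSet_compose S c hS _ (fun i _ => hmin i)
  have hub : ∀ k ∈ lengthSet (coprodSubmonoid H) c, k ≤ ∑ i ∈ S, sSup (lengthSet (H i) (c.1 i)) := by
    intro k hk
    obtain ⟨κ, hκ, rfl⟩ := lengthSet_decompose c S hS hk
    exact Finset.sum_le_sum fun i _ => le_csSup (hfin i).bddAbove (hκ i)
  have hlb : ∀ k ∈ lengthSet (coprodSubmonoid H) c, (∑ i ∈ S, sInf (lengthSet (H i) (c.1 i))) ≤ k := by
    intro k hk
    obtain ⟨κ, hκ, rfl⟩ := lengthSet_decompose c S hS hk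
    exact Finset.sum_le_sum fun i _ => Nat.sInf_le (hκ i)
  constructor
  · exact le_antisymm (csSup_le ⟨_, hmemM⟩ hub) (le_csSup ⟨_, hub⟩ hmemM)
  · exact le_antisymm (Nat.sInf_le hmemm) (le_csInf ⟨_, hmemM⟩ hlb)

end Coprod


section Arith
variable {M : Type*} [CommMonoid M]

theorem elasticity_gt_nat {a : M} {u v : ℕ} (hv : 0 < v) (hvu : v ≤ u)
    (hne : (lengthSet M a).Nonempty) (h : ((u : ℝ) / (v : ℝ)) < elasticity M a) :
    ¬ IsUnit a ∧ 1 ≤ sInf (lengthSet M a) ∧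
      u * sInf (lengthSet M a) < v * sSup (lengthSet M a) := by
  have hv' : (0:ℝ) < v := by exact_mod_cast hv
  have h1 : (1:ℝ) ≤ (u:ℝ)/(v:ℝ) := by
    rw [le_div_iff₀ hv']
    rw [one_mul]
    exact_mod_cast hvu
  have hnu : ¬ IsUnit a := by
    intro hu
    rw [elasticity, if_pos hu] at h
    linarith
  have hm : sInf (lengthSet M a) ∈ lengthSet M a := Nat.sInf_mem hne
  have hm1 : 1 ≤ sInf (lengthSet M a) :=
    Nat.one_le_iff_ne_zero.mpr (fun h0 => zero_not_mem_lengthSet hnu (h0 ▸ hm))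
  refine ⟨hnu, hm1, ?_⟩
  rw [elasticity, if_neg hnu] at h
  have hmpos : (0:ℝ) < ((sInf (lengthSet M a) : ℕ) : ℝ) := by exact_mod_cast hm1
  rw [div_lt_div_iff₀ hv' hmpos] at h
  have : (u:ℝ) * ((sInf (lengthSet M a) : ℕ) : ℝ) < (v:ℝ) * ((sSup (lengthSet M a) : ℕ) : ℝ) := by
    calc (u:ℝ) * _ < ((sSup (lengthSet M a) : ℕ) : ℝ) * (v:ℝ) := h
    _ = (v:ℝ) * ((sSup (lengthSet M a) : ℕ) : ℝ) := mul_comm _ _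
  exact_mod_cast this

theorem elasticity_eq_of {a : M} {u v : ℕ} (hv : 0 < v) (hnu : ¬ IsUnit a)
    (hm : 1 ≤ sInf (lengthSet M a))
    (h : v * sSup (lengthSet M a) = u * sInf (lengthSet M a)) :
    elasticity M a = (u : ℝ) / (v : ℝ) := by
  have hv' : (0:ℝ) < v := by exact_mod_cast hv
  have hmpos : (0:ℝ) < ((sInf (lengthSet M a) : ℕ) : ℝ) := by exact_mod_cast hm
  rw [elasticity, if_neg hnu, div_eq_div_iff hmpos.ne' hv'.ne']
  have : ((v : ℕ) : ℝ) * ((sSup (lengthSet M a) : ℕ) : ℝ) = ((u:ℕ):ℝ) * ((sInf (lengthSet M a) : ℕ) : ℝ) := by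
    exact_mod_cast congrArg (fun n : ℕ => (n : ℝ)) h
  linarith [this]

end Arith

/-- The coproduct of a family `(H_i)_{i ∈ ℕ}` of BF-monoids all having
the same elasticity `r` is fully elastic. -/
theorem statement14 (H : ℕ → Type*) [∀ i, CancelCommMonoid (H i)]
    (hbf : ∀ i, IsBFMonoid (H i)) (r : EReal) (hr : ∀ i, monoidElasticity (H i) = r)
    (q : ℚ) (h1 : 1 < q)
    (h2 : ((q : ℝ) : EReal) < monoidElasticity (coprodSubmonoid H)) :
    ∃ a : coprodSubmonoid H, elasticity (coprodSubmonoid H) a = (q : ℝ) := by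
  classical
  set u : ℕ := q.num.toNat with hu_def
  set v : ℕ := q.den with hv_def
  have hqpos : 0 < q := lt_trans one_pos h1
  have hnum : (0:ℤ) < q.num := Rat.num_pos.mpr hqpos
  have hvpos : 0 < v := q.pos
  have hu' : (u : ℤ) = q.num := Int.toNat_of_nonneg hnum.le
  have hcast : (q : ℝ) = (u : ℝ) / (v : ℝ) := by
    rw [Rat.cast_def, ← hu']
    push_cast
    rfl
  have hvR : (0:ℝ) < (v:ℝ) := by exact_mod_cast hvpos
  have hvu : v < u := by
    have h1R : (1:ℝ) < (u:ℝ)/(v:ℝ) := by rw [← hcast]; exact_mod_cast h1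
    rw [lt_div_iff₀ hvR, one_mul] at h1R
    exact_mod_cast h1R
  -- step 1 : an element of the coproduct with elasticity > q
  obtain ⟨c, hc⟩ : ∃ c : coprodSubmonoid H,
      (u:ℝ)/(v:ℝ) < elasticity (coprodSubmonoid H) c := by
    rw [monoidElasticity, lt_iSup_iff] at h2
    obtain ⟨c, hc⟩ := h2
    exact ⟨c, by rw [← hcast]; exact_mod_cast hc⟩
  set S : Finset ℕ := c.2.toFinset with hS_def
  have hSc : ∀ i ∉ S, c.1 i = 1 := by
    intro i hi
    by_contra hcon
    exact hi (c.2.mem_toFinset.mpr hcon)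
  obtain ⟨hsup, hinf⟩ := sSup_lengthSet_coprod hbf c S hSc
  have hneG : (lengthSet (coprodSubmonoid H) c).Nonempty :=
    ⟨_, lengthSet_compose S c hSc _ (fun i _ => Nat.sInf_mem (lengthSet_nonempty (hbf i) _))⟩
  obtain ⟨hcnu, hcm1, hckey⟩ := elasticity_gt_nat hvpos hvu.le hneG hc
  rw [hsup, hinf] at hckey
  -- step 2 : a single component with elasticity > q
  obtain ⟨i0, hi0⟩ : ∃ i0, u * sInf (lengthSet (H i0) (c.1 i0)) <
      v * sSup (lengthSet (H i0) (c.1 i0)) := by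
    by_contra hcon
    push_neg at hcon
    have hle : v * ∑ i ∈ S, sSup (lengthSet (H i) (c.1 i)) ≤
        u * ∑ i ∈ S, sInf (lengthSet (H i) (c.1 i)) := by
      rw [Finset.mul_sum, Finset.mul_sum]
      exact Finset.sum_le_sum fun i _ => hcon i
    omega
  have hnu0 : ¬ IsUnit (c.1 i0) := by
    intro hu0
    rw [lengthSet_of_isUnit hu0] at hi0
    simp [csSup_singleton, csInf_singleton] at hi0
  have hm0 : 1 ≤ sInf (lengthSet (H i0) (c.1 i0)) :=
    Nat.one_le_iff_ne_zero.mpr fun h0 => zero_not_mem_lengthSet hnu0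
      (h0 ▸ Nat.sInf_mem (lengthSet_nonempty (hbf i0) _))
  have hel0 : (u:ℝ)/(v:ℝ) < elasticity (H i0) (c.1 i0) := by
    rw [elasticity, if_neg hnu0, div_lt_div_iff₀ hvR (by exact_mod_cast hm0)]
    have : ((u * sInf (lengthSet (H i0) (c.1 i0)) : ℕ) : ℝ) <
        ((v * sSup (lengthSet (H i0) (c.1 i0)) : ℕ) : ℝ) := by exact_mod_cast hi0
    push_cast at this
    linarith
  -- step 3 : every component monoid has elasticity > q  ; pick witnesses
  have hexa : ∀ j, ∃ aj : H j, (u:ℝ)/(v:ℝ) < elasticity (H j) aj := by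
    intro j
    have hj : ((u:ℝ)/(v:ℝ) : ℝ) < ((elasticity (H i0) (c.1 i0) : ℝ) : EReal).toReal := by
      simpa using hel0
    have hrgt : (((u:ℝ)/(v:ℝ) : ℝ) : EReal) < monoidElasticity (H j) := by
      rw [hr j, ← hr i0]
      calc (((u:ℝ)/(v:ℝ) : ℝ) : EReal) < ((elasticity (H i0) (c.1 i0) : ℝ) : EReal) := by
            exact_mod_cast hel0
      _ ≤ monoidElasticity (H i0) :=
            le_iSup (fun a => ((elasticity (H i0) a : ℝ) : EReal)) (c.1 i0)
    rw [monoidElasticity, lt_iSup_iff] at hrgt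
    obtain ⟨aj, haj⟩ := hrgt
    exact ⟨aj, by exact_mod_cast haj⟩
  choose a ha using hexa
  have hprops := fun j => elasticity_gt_nat hvpos hvu.le (lengthSet_nonempty (hbf j) _) (ha j)
  set m : ℕ → ℕ := fun j => sInf (lengthSet (H j) (a j)) with hm_def
  set Mx : ℕ → ℕ := fun j => sSup (lengthSet (H j) (a j)) with hMx_def
  have hkey : ∀ j, u * m j < v * Mx j := fun j => (hprops j).2.2
  have hm1 : ∀ j, 1 ≤ m j := fun j => (hprops j).2.1
  -- step 4 : pigeonhole to find an interval with divisible defect sum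
  set d : ℕ := u - v with hd_def
  have hdpos : 0 < d := by omega
  set P : ℕ → ℕ := fun n => ∑ j ∈ Finset.range n, (v * Mx j - u * m j) with hP_def
  obtain ⟨n1, hn1, n2, hn2, hne12, heq⟩ :=
    Finset.exists_ne_map_eq_of_card_lt_of_maps_to
      (s := Finset.range (d+1)) (t := Finset.range d)
      (by simp) (f := fun n => P n % d) (fun n _ => Finset.mem_range.mpr (Nat.mod_lt _ hdpos))
  -- wlog n1 < n2
  obtain ⟨n1, n2, hn12, heq⟩ : ∃ n1 n2, n1 < n2 ∧ P n1 % d = P n2 % d := by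
    rcases lt_or_gt_of_ne hne12 with h | h
    · exact ⟨n1, n2, h, heq⟩
    · exact ⟨n2, n1, h, heq.symm⟩
  have hP12 : P n1 + ∑ j ∈ Finset.Ico n1 n2, (v * Mx j - u * m j) = P n2 := by
    rw [hP_def]
    simp only [Finset.range_eq_Ico]
    exact Finset.sum_Ico_consecutive _ (Nat.zero_le n1) hn12.le
  obtain ⟨s, hs⟩ : ∃ s, ∑ j ∈ Finset.Ico n1 n2, (v * Mx j - u * m j) = d * s := by
    have hle : P n1 ≤ P n2 := by omega
    have hdvd : d ∣ P n2 - P n1 := (Nat.modEq_iff_dvd' hle).mp heq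
    obtain ⟨t, ht⟩ := hdvd
    exact ⟨t, by omega⟩
  -- atoms in the fresh components
  have hwex : ∀ j, ∃ w : H j, Irreducible w := by
    intro j
    have hmem : m j ∈ lengthSet (H j) (a j) := Nat.sInf_mem (lengthSet_nonempty (hbf j) _)
    rw [lengthSet_of_not_isUnit (hprops j).1] at hmem
    obtain ⟨f, hf, -⟩ := hmem
    exact ⟨f ⟨0, hm1 j⟩, hf _⟩
  choose w hw using hwex
  -- the witness element
  have hsupp : {i : ℕ | (fun i => if i ∈ Finset.Ico n1 n2 then a i
      else if i ∈ Finset.Ico n2 (n2 + s) then w i else 1) i ≠ 1}.Finite := by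
    refine (Finset.Ico n1 (n2+s)).finite_toSet.subset ?_
    intro i hi
    simp only [Set.mem_setOf_eq] at hi
    by_contra hbig
    apply hi
    have h1 : i ∉ Finset.Ico n1 n2 := by
      intro hmem
      simp only [Finset.mem_Ico] at hmem
      exact hbig (Finset.mem_coe.mpr (Finset.mem_Ico.mpr ⟨by omega, by omega⟩))
    have h2 : i ∉ Finset.Ico n2 (n2+s) := by
      intro hmem
      simp only [Finset.mem_Ico] at hmem
      exact hbig (Finset.mem_coe.mpr (Finset.mem_Ico.mpr ⟨by omega, by omega⟩))
    simp [h1, h2]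
  set cstar : coprodSubmonoid H := ⟨fun i => if i ∈ Finset.Ico n1 n2 then a i
      else if i ∈ Finset.Ico n2 (n2 + s) then w i else 1, hsupp⟩ with hcstar_def
  have hcval : ∀ i, cstar.1 i = if i ∈ Finset.Ico n1 n2 then a i
      else if i ∈ Finset.Ico n2 (n2 + s) then w i else 1 := fun i => rfl
  have hcT : ∀ i ∈ Finset.Ico n1 n2, cstar.1 i = a i := by
    intro i hi; rw [hcval, if_pos hi]
  have hcF : ∀ i ∈ Finset.Ico n2 (n2+s), cstar.1 i = w i := by
    intro i hi
    have h1 : i ∉ Finset.Ico n1 n2 := by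
      simp only [Finset.mem_Ico] at hi ⊢; omega
    rw [hcval, if_neg h1, if_pos hi]
  have hcE : ∀ i ∉ Finset.Ico n1 (n2+s), cstar.1 i = 1 := by
    intro i hi
    have h1 : i ∉ Finset.Ico n1 n2 := by
      simp only [Finset.mem_Ico] at hi ⊢; omega
    have h2 : i ∉ Finset.Ico n2 (n2+s) := by
      simp only [Finset.mem_Ico] at hi ⊢; omega
    rw [hcval, if_neg h1, if_neg h2]
  obtain ⟨hsupC, hinfC⟩ := sSup_lengthSet_coprod hbf cstar (Finset.Ico n1 (n2+s)) hcE
  rw [← Finset.Ico_union_Ico_eq_Ico hn12.le (Nat.le_add_right n2 s),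
    Finset.sum_union (Finset.Ico_disjoint_Ico_consecutive n1 n2 (n2+s))] at hsupC hinfC
  have hsupT : ∑ i ∈ Finset.Ico n1 n2, sSup (lengthSet (H i) (cstar.1 i))
      = ∑ i ∈ Finset.Ico n1 n2, Mx i :=
    Finset.sum_congr rfl fun i hi => by rw [hcT i hi, hMx_def]
  have hinfT : ∑ i ∈ Finset.Ico n1 n2, sInf (lengthSet (H i) (cstar.1 i))
      = ∑ i ∈ Finset.Ico n1 n2, m i :=
    Finset.sum_congr rfl fun i hi => by rw [hcT i hi, hm_def]
  have hsupF : ∑ i ∈ Finset.Ico n2 (n2+s), sSup (lengthSet (H i) (cstar.1 i)) = s := by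
    rw [Finset.sum_congr rfl (fun i hi => by
      rw [hcF i hi, lengthSet_irreducible (hw i), csSup_singleton])]
    simp
  have hinfF : ∑ i ∈ Finset.Ico n2 (n2+s), sInf (lengthSet (H i) (cstar.1 i)) = s := by
    rw [Finset.sum_congr rfl (fun i hi => by
      rw [hcF i hi, lengthSet_irreducible (hw i), csInf_singleton])]
    simp
  rw [hsupT, hsupF] at hsupC
  rw [hinfT, hinfF] at hinfC
  -- cstar is not a unit, and its min length is positive
  have hn1T : n1 ∈ Finset.Ico n1 n2 := Finset.mem_Ico.mpr ⟨le_refl n1, hn12⟩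
  have hcnu' : ¬ IsUnit cstar := by
    intro hu
    have := (coprod_isUnit_iff cstar).mp hu n1
    rw [hcT n1 hn1T] at this
    exact (hprops n1).1 this
  have hmin1 : 1 ≤ sInf (lengthSet (coprodSubmonoid H) cstar) := by
    rw [hinfC]
    have h1 : m n1 ≤ ∑ i ∈ Finset.Ico n1 n2, m i :=
      Finset.single_le_sum (fun i _ => Nat.zero_le (m i)) hn1T
    have := hm1 n1
    omega
  -- the main computation
  have hsplit : ∑ j ∈ Finset.Ico n1 n2, (v * Mx j)
      = ∑ j ∈ Finset.Ico n1 n2, (u * m j) + ∑ j ∈ Finset.Ico n1 n2, (v * Mx j - u * m j) := by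
    rw [← Finset.sum_add_distrib]
    exact Finset.sum_congr rfl fun j _ => by have := hkey j; omega
  have hmain : v * sSup (lengthSet (coprodSubmonoid H) cstar)
      = u * sInf (lengthSet (coprodSubmonoid H) cstar) := by
    rw [hsupC, hinfC, Nat.mul_add, Nat.mul_add, Finset.mul_sum, Finset.mul_sum, hsplit, hs]
    have hds : d * s + v * s = u * s := by
      rw [← Nat.add_mul]
      congr 1
      omega
    omega
  refine ⟨cstar, ?_⟩
  rw [elasticity_eq_of hvpos hcnu' hmin1 hmain, hcast]
end
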